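/- With K_{ij} = (M_j^i)* ⊗ A_{ij} as above, and ρ = ∑_j ρ_j ⊗ |j⟩⟨j| with Tr(ρ_j) > 0, one has ∑_{i,j} Tr^{(1)}(K_{ij}* (ρ ⊗ I) K_{ij}) = ρ, where Tr^{(1)}(a ⊗ b) = Tr(a) b is the partial trace over the first tensor factor. -/

import Mathlib

open Matrix Kronecker BigOperators ComplexOrder

/-- Partial trace over the first tensor factor: `Tr⁽¹⁾(a ⊗ b) = Tr(a) b`. -/
noncomputable def ptrace1 {α β : Type*} [Fintype α] (M : Matrix (α × β) (α × β) ℂ) : Matrix β β ℂ :=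
  Matrix.of fun b b' => ∑ a, M (a, b) (a, b')

noncomputable def Matrix.PosSemidef.sqrt {n 𝕜 : Type*} [Fintype n] [DecidableEq n] [RCLike 𝕜]
    {A : Matrix n n 𝕜} (hA : A.PosSemidef) : Matrix n n 𝕜 :=
  hA.1.eigenvectorUnitary.1 * diagonal ((↑) ∘ (√·) ∘ hA.1.eigenvalues) *
  (star hA.1.eigenvectorUnitary : Matrix n n 𝕜)

lemma Matrix.PosSemidef.sqrt_conjT {n 𝕜 : Type*} [Fintype n] [DecidableEq n] [RCLike 𝕜]
    {A : Matrix n n 𝕜} (hA : A.PosSemidef) : hA.sqrtᴴ = hA.sqrt := by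
  unfold Matrix.PosSemidef.sqrt
  rw [conjTranspose_mul, conjTranspose_mul, diagonal_conjTranspose, Matrix.mul_assoc]
  simp [Matrix.star_eq_conjTranspose]
  congr 3
  funext i
  simp

lemma Matrix.PosSemidef.sqrt_mul_self {n 𝕜 : Type*} [Fintype n] [DecidableEq n] [RCLike 𝕜]
    {A : Matrix n n 𝕜} (hA : A.PosSemidef) : hA.sqrt * hA.sqrt = A := by
  unfold Matrix.PosSemidef.sqrt
  conv_rhs => rw [hA.1.spectral_theorem, Unitary.conjStarAlgAut_apply]
  have hU : (star hA.1.eigenvectorUnitary : Matrix n n 𝕜) * hA.1.eigenvectorUnitary.1 = 1 :=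
    Unitary.coe_star_mul_self _
  have hD : diagonal (((↑) ∘ (√·) ∘ hA.1.eigenvalues : n → 𝕜)) *
      diagonal ((↑) ∘ (√·) ∘ hA.1.eigenvalues) = diagonal (RCLike.ofReal ∘ hA.1.eigenvalues) := by
    rw [diagonal_mul_diagonal]
    congr 1; funext i
    simp only [Function.comp_apply]
    rw [← RCLike.ofReal_mul, Real.mul_self_sqrt (hA.eigenvalues_nonneg i)]
  calc _ = hA.1.eigenvectorUnitary.1 * diagonal ((↑) ∘ (√·) ∘ hA.1.eigenvalues) *
      ((star hA.1.eigenvectorUnitary : Matrix n n 𝕜) * hA.1.eigenvectorUnitary.1) *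
      diagonal ((↑) ∘ (√·) ∘ hA.1.eigenvalues) * (star hA.1.eigenvectorUnitary : Matrix n n 𝕜) := by
        simp only [Matrix.mul_assoc]
    _ = _ := by rw [hU, Matrix.mul_one, Matrix.mul_assoc _ (diagonal _) (diagonal _), hD]

lemma kronecker_conjT {l m p q : Type*} (a : Matrix l m ℂ) (b : Matrix p q ℂ) :
    (a ⊗ₖ b)ᴴ = aᴴ ⊗ₖ bᴴ := by
  ext ⟨x1, x2⟩ ⟨y1, y2⟩
  simp [kroneckerMap_apply, conjTranspose_apply, mul_comm]

lemma stdBasis_conjT {m : Type*} [DecidableEq m] (i j : m) :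
    (Matrix.single i j (1 : ℂ))ᴴ = Matrix.single j i (1 : ℂ) := by
  ext a b
  simp [conjTranspose_apply, Matrix.single, and_comm]

lemma ptrace1_kronecker {α β : Type*} [Fintype α] (a : Matrix α α ℂ) (b : Matrix β β ℂ) :
    ptrace1 (a ⊗ₖ b) = a.trace • b := by
  ext x y
  simp [ptrace1, kroneckerMap_apply, Matrix.trace, Matrix.diag, Finset.sum_mul]

/-- With `K_{ij} = (M_j^i)* ⊗ A_{ij}` and `ρ = ∑ j, ρ_j ⊗ |j⟩⟨j|`,
`∑_{i,j} Tr⁽¹⁾(K_{ij}* (ρ ⊗ 1) K_{ij}) = ρ`. -/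
theorem oqrw_amplitude_invariance
    {n Λ : Type*} [Fintype n] [Fintype Λ] [DecidableEq n] [DecidableEq Λ]
    (B : Λ → Λ → Matrix n n ℂ)
    (hB : ∀ j, ∑ i, (B i j)ᴴ * B i j = 1)
    (M : Λ → Λ → Matrix (n × Λ) (n × Λ) ℂ)
    (hM : ∀ i j, M i j = (B i j) ⊗ₖ (Matrix.single i j (1 : ℂ)))
    (ρf : Λ → Matrix n n ℂ)
    (hpos : ∀ j, (ρf j).PosSemidef)
    (htr : ∀ j, 0 < (ρf j).trace)
    (A : Λ → Λ → Matrix (n × Λ) (n × Λ) ℂ)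
    (hA : ∀ i j, A i j
        = ((Real.sqrt ((ρf j).trace.re) : ℂ))⁻¹ •
            (((hpos j).sqrt) ⊗ₖ (Matrix.single i j (1 : ℂ))))
    (K : Λ → Λ → Matrix ((n × Λ) × (n × Λ)) ((n × Λ) × (n × Λ)) ℂ)
    (hK : ∀ i j, K i j = (M i j)ᴴ ⊗ₖ A i j)
    (ρ : Matrix (n × Λ) (n × Λ) ℂ)
    (hρ : ρ = ∑ j, (ρf j) ⊗ₖ (Matrix.single j j (1 : ℂ))) :
    ∑ i, ∑ j, ptrace1 ((K i j)ᴴ * (ρ ⊗ₖ (1 : Matrix (n × Λ) (n × Λ) ℂ)) * K i j) = ρ := by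
  -- facts about the trace of ρf j
  have htr_re : ∀ j, (ρf j).trace = (((ρf j).trace.re : ℝ) : ℂ) := by
    intro j
    have h := (htr j)
    rw [Complex.lt_def] at h
    exact (Complex.ext_iff.2 ⟨rfl, by simpa using h.2.symm⟩)
  have htr_pos : ∀ j, (0:ℝ) < (ρf j).trace.re := by
    intro j
    have h := (htr j)
    rw [Complex.lt_def] at h
    simpa using h.1
  -- step 1 : the general term
  have key : ∀ i j, ptrace1 ((K i j)ᴴ * (ρ ⊗ₖ (1 : Matrix (n × Λ) (n × Λ) ℂ)) * K i j)
      = ((ρf j).trace)⁻¹ • ((B i j * ρf j * (B i j)ᴴ).trace •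
          ((ρf j) ⊗ₖ (Matrix.single j j (1 : ℂ)))) := by
    intro i j
    have hKH : (K i j)ᴴ = (M i j) ⊗ₖ (A i j)ᴴ := by
      rw [hK, kronecker_conjT, conjTranspose_conjTranspose]
    rw [hKH, hK]
    rw [← Matrix.mul_kronecker_mul, ← Matrix.mul_kronecker_mul, ptrace1_kronecker]
    -- trace part : Tr (M ρ Mᴴ) = Tr (B ρ_j Bᴴ)
    have htrace : (M i j * ρ * (M i j)ᴴ).trace = (B i j * ρf j * (B i j)ᴴ).trace := by
      rw [hρ, hM, kronecker_conjT, stdBasis_conjT]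
      rw [Finset.mul_sum, Finset.sum_mul, Matrix.trace_sum]
      rw [Finset.sum_eq_single j]
      · rw [← Matrix.mul_kronecker_mul, ← Matrix.mul_kronecker_mul,
          Matrix.single_mul_single_same, Matrix.single_mul_single_same,
          Matrix.trace_kronecker, Matrix.trace_single_eq_same]
        norm_num
      · intro k _ hk
        rw [← Matrix.mul_kronecker_mul, Matrix.single_mul_single_of_ne (h := Ne.symm hk)]
        simp
      · intro h; exact absurd (Finset.mem_univ j) h
    rw [htrace]
    -- the A part : Aᴴ * 1 * A = (tr ρ_j)⁻¹ • (ρ_j ⊗ e_jj)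
    have hApart : (A i j)ᴴ * (1 : Matrix (n × Λ) (n × Λ) ℂ) * A i j
        = ((ρf j).trace)⁻¹ • ((ρf j) ⊗ₖ (Matrix.single j j (1 : ℂ))) := by
      rw [Matrix.mul_one, hA, conjTranspose_smul, kronecker_conjT, stdBasis_conjT,
        (hpos j).sqrt_conjT]
      rw [Matrix.smul_mul, Matrix.mul_smul, ← Matrix.mul_kronecker_mul,
        Matrix.single_mul_single_same, one_mul, (hpos j).sqrt_mul_self, smul_smul]
      congr 1
      rw [htr_re j]
      have h0 : (Real.sqrt ((ρf j).trace.re) : ℂ) ≠ 0 := by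
        simpa using (Real.sqrt_pos.2 (htr_pos j)).ne'
      rw [Complex.star_def, ← Complex.ofReal_inv, Complex.conj_ofReal, Complex.ofReal_inv,
        ← mul_inv]
      norm_cast
      rw [Real.mul_self_sqrt (le_of_lt (htr_pos j))]
    rw [hApart, smul_comm]
  -- step 2 : sum
  calc ∑ i, ∑ j, ptrace1 ((K i j)ᴴ * (ρ ⊗ₖ (1 : Matrix (n × Λ) (n × Λ) ℂ)) * K i j)
      = ∑ j, ∑ i, ((ρf j).trace)⁻¹ • ((B i j * ρf j * (B i j)ᴴ).trace •
          ((ρf j) ⊗ₖ (Matrix.single j j (1 : ℂ)))) := by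
        rw [Finset.sum_comm]
        exact Finset.sum_congr rfl fun j _ => Finset.sum_congr rfl fun i _ => key i j
    _ = ∑ j, (ρf j) ⊗ₖ (Matrix.single j j (1 : ℂ)) := by
        refine Finset.sum_congr rfl fun j _ => ?_
        have hs : ∑ i, (B i j * ρf j * (B i j)ᴴ).trace = (ρf j).trace := by
          have : ∀ i, (B i j * ρf j * (B i j)ᴴ).trace = ((B i j)ᴴ * B i j * ρf j).trace := by
            intro i
            rw [Matrix.trace_mul_cycle]
          simp_rw [this]
          rw [← Matrix.trace_sum, ← Matrix.sum_mul, hB j, one_mul]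
        rw [← Finset.smul_sum, ← Finset.sum_smul, hs, smul_smul,
          inv_mul_cancel₀ (ne_of_gt (htr j)), one_smul]
    _ = ρ := hρ.symm
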